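/- Let G = (V, E) be a cactus graph containing exactly one cycle (i.e., G is connected unicyclic, so |E| = |V|). Then the tree cover number of G equals 2, i.e., T(G) = 2. -/

import Mathlib

open SimpleGraph

variable {V : Type*}

lemma reachable_deleteEdges_of_walk {H : SimpleGraph V} {a b : V}
    (hr : (H.deleteEdges {s(a,b)}).Reachable a b) :
    ∀ {x y : V}, H.Walk x y → (H.deleteEdges {s(a,b)}).Reachable x y := by
  intro x y w
  induction w with
  | nil => exact Reachable.refl _
  | @cons u v y h p ih =>
    refine Reachable.trans ?_ ih
    by_cases he : s(u, v) = s(a, b)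
    · rw [Sym2.eq_iff] at he
      rcases he with ⟨rfl, rfl⟩ | ⟨rfl, rfl⟩
      · exact hr
      · exact hr.symm
    · exact (SimpleGraph.deleteEdges_adj.mpr ⟨h, by simpa using he⟩).reachable

lemma connected_deleteEdges_of_reachable {H : SimpleGraph V} {a b : V} (hc : H.Connected)
    (hr : (H.deleteEdges {s(a,b)}).Reachable a b) :
    (H.deleteEdges {s(a,b)}).Connected := by
  haveI := hc.nonempty
  exact Connected.mk fun x y => reachable_deleteEdges_of_walk hr (hc.preconnected x y).some

lemma card_le_of_connected [Fintype V] :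
    ∀ (m : ℕ) (H : SimpleGraph V), H.edgeSet.ncard = m → H.Connected →
      Fintype.card V ≤ m + 1 := by
  intro m
  induction m using Nat.strong_induction_on with
  | _ m ih =>
    intro H hm hc
    by_cases ha : H.IsAcyclic
    · have ht : H.IsTree := ⟨hc, ha⟩
      have : Fintype ↥H.edgeSet := Fintype.ofFinite _
      have h2 := ht.card_edgeFinset
      rw [← hm, ← h2]
      have : H.edgeSet.ncard = H.edgeFinset.card := by
        rw [← SimpleGraph.coe_edgeFinset, Set.ncard_coe_finset]
      omega
    · simp only [SimpleGraph.IsAcyclic, not_forall, not_not] at ha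
      obtain ⟨v, c, hcyc⟩ := ha
      cases c with
      | nil => exact absurd rfl hcyc.ne_nil
      | @cons _ w _ hadj q =>
        obtain ⟨hadj', hreach⟩ :=
          (SimpleGraph.adj_and_reachable_delete_edges_iff_exists_cycle (G := H) (v := v) (w := w)).mpr
            ⟨v, Walk.cons hadj q, hcyc, by simp⟩
        have hconn' : (H.deleteEdges {s(v,w)}).Connected :=
          connected_deleteEdges_of_reachable hc hreach
        have hmem : s(v, w) ∈ H.edgeSet := hadj'
        have hcard' : (H.deleteEdges {s(v,w)}).edgeSet.ncard = m - 1 := by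
          rw [SimpleGraph.edgeSet_deleteEdges, Set.ncard_diff_singleton_of_mem hmem, hm]
        have hm1 : 0 < m := by
          rw [← hm]
          exact (Set.ncard_pos (Set.toFinite _)).mpr ⟨_, hmem⟩
        have := ih (m - 1) (by omega) _ hcard' hconn'
        omega

lemma isAcyclic_of_connected_card [Fintype V] (H : SimpleGraph V) (hc : H.Connected)
    (hcard : Fintype.card V = H.edgeSet.ncard + 1) : H.IsAcyclic := by
  by_contra ha
  simp only [SimpleGraph.IsAcyclic, not_forall, not_not] at ha
  obtain ⟨v, c, hcyc⟩ := ha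
  cases c with
  | nil => exact absurd rfl hcyc.ne_nil
  | @cons _ w _ hadj q =>
    obtain ⟨hadj', hreach⟩ :=
      (SimpleGraph.adj_and_reachable_delete_edges_iff_exists_cycle (G := H) (v := v) (w := w)).mpr
        ⟨v, Walk.cons hadj q, hcyc, by simp⟩
    have hconn' : (H.deleteEdges {s(v,w)}).Connected :=
      connected_deleteEdges_of_reachable hc hreach
    have hmem : s(v, w) ∈ H.edgeSet := hadj'
    have hm1 : 0 < H.edgeSet.ncard :=
      (Set.ncard_pos (Set.toFinite _)).mpr ⟨_, hmem⟩
    have hcard' : (H.deleteEdges {s(v,w)}).edgeSet.ncard = H.edgeSet.ncard - 1 := by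
      rw [SimpleGraph.edgeSet_deleteEdges, Set.ncard_diff_singleton_of_mem hmem]
    have := card_le_of_connected _ _ hcard' hconn'
    omega

lemma exists_walk_avoid {H : SimpleGraph V} {a c v : V} (q : H.Walk a v) (hq : q.IsPath)
    (hf : s(a,c) ∈ q.edges) : ∃ r : H.Walk c v, s(a,c) ∉ r.edges := by
  cases q with
  | nil => simp at hf
  | @cons _ d _ hadj r =>
    rw [Walk.cons_isPath_iff] at hq
    have hnr : s(a,c) ∉ r.edges := fun h => hq.2 (Walk.fst_mem_support_of_mem_edges r h)
    rw [Walk.edges_cons, List.mem_cons] at hf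
    rcases hf with hf | hf
    · have hcd : c = d := by
        rw [Sym2.eq_iff] at hf
        rcases hf with ⟨-, h⟩ | ⟨h1, -⟩
        · exact h
        · exact absurd h1 hadj.ne
      subst hcd
      exact ⟨r, hnr⟩
    · exact absurd hf hnr

lemma induce_reachSet_connected [DecidableEq V] {H : SimpleGraph V} (a : V) :
    (H.induce {v | H.Reachable v a}).Connected := by
  apply SimpleGraph.induce_connected_of_patches a (by exact Reachable.refl a)
  intro v hv
  obtain ⟨w⟩ := (hv : H.Reachable v a)
  refine ⟨{x | x ∈ w.support}, fun x hx => ⟨w.dropUntil x hx⟩, w.end_mem_support,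
    w.start_mem_support, ?_⟩
  exact (w.connected_induce_support).preconnected _ _

lemma isAcyclic_mono {H K : SimpleGraph V} (hle : H ≤ K) (hK : K.IsAcyclic) : H.IsAcyclic :=
  fun _v c hc => hK (c.mapLe hle) (hc.mapLe hle)

lemma isAcyclic_induce {H : SimpleGraph V} (hH : H.IsAcyclic) (s : Set V) :
    (H.induce s).IsAcyclic :=
  fun _v c hc => hH (c.map (SimpleGraph.Embedding.induce (G := H) s).toHom)
    (hc.map (SimpleGraph.Embedding.induce (G := H) s).injective)

/-- A cactus graph: a simple connected graph in which every edge belongs to at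
most one cycle, i.e. any two cycles sharing a common edge have the same edge set. -/
def IsCactus {n : ℕ} (G : SimpleGraph (Fin n)) : Prop :=
  G.Connected ∧
    ∀ (u w : Fin n) (p : G.Walk u u) (q : G.Walk w w), p.IsCycle → q.IsCycle →
      ∀ e ∈ p.edges, e ∈ q.edges → ∀ e', (e' ∈ p.edges ↔ e' ∈ q.edges)

/-- The tree cover number of `G`: the minimum number of pairwise vertex-disjoint
induced subgraphs of `G`, each of which is a tree, whose vertex sets cover all
vertices of `G`. -/
noncomputable def treeCoverNumber {n : ℕ} (G : SimpleGraph (Fin n)) : ℕ :=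
  sInf { k : ℕ | ∃ 𝒯 : Finset (Set (Fin n)), 𝒯.card = k ∧
    (∀ S ∈ 𝒯, (G.induce S).IsTree) ∧
    (𝒯 : Set (Set (Fin n))).PairwiseDisjoint id ∧
    (∀ v : Fin n, ∃ S ∈ 𝒯, v ∈ S) }

/-- A cactus graph with exactly one cycle (a connected unicyclic graph, i.e.
`|E| = |V|`) has tree cover number 2. -/
theorem treeCoverNumber_eq_two_of_unicyclic_cactus {n : ℕ}
    (G : SimpleGraph (Fin n)) [DecidableRel G.Adj] (hG : IsCactus G)
    (hE : G.edgeFinset.card = n) :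
    treeCoverNumber G = 2 := by
  classical
  obtain ⟨hconn, -⟩ := hG
  haveI hnem : Nonempty (Fin n) := hconn.nonempty
  have hn0 : 0 < n := by
    have := Fintype.card_pos (α := Fin n)
    simpa using this
  have hEncard : G.edgeSet.ncard = n := by
    have h1 : G.edgeSet.ncard = G.edgeFinset.card := by
      simp [Set.ncard_eq_toFinset_card', SimpleGraph.edgeFinset]
    omega
  -- G is not acyclic
  have hGnotac : ¬ G.IsAcyclic := by
    intro ha
    have ht : G.IsTree := ⟨hconn, ha⟩
    have := ht.card_edgeFinset
    rw [hE, Fintype.card_fin] at this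
    omega
  simp only [SimpleGraph.IsAcyclic, not_forall, not_not] at hGnotac
  obtain ⟨a, p, hcyc⟩ := hGnotac
  cases p with
  | nil => exact absurd rfl hcyc.ne_nil
  | @cons _ b _ hab q =>
  obtain ⟨hadj, hreach⟩ :=
    (SimpleGraph.adj_and_reachable_delete_edges_iff_exists_cycle (G := G)
      (v := a) (w := b)).mpr ⟨a, Walk.cons hab q, hcyc, by simp⟩
  set G' := G.deleteEdges {s(a,b)} with hG'def
  have hreach' : G'.Reachable a b := hreach
  have hG'conn : G'.Connected := connected_deleteEdges_of_reachable hconn hreach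
  have hmemab : s(a,b) ∈ G.edgeSet := hadj
  have hG'card : G'.edgeSet.ncard = n - 1 := by
    rw [hG'def, SimpleGraph.edgeSet_deleteEdges, Set.ncard_diff_singleton_of_mem hmemab,
      hEncard]
  have hG'ac : G'.IsAcyclic := by
    apply isAcyclic_of_connected_card _ hG'conn
    rw [hG'card, Fintype.card_fin]
    omega
  obtain ⟨w0⟩ := hreach'
  obtain ⟨q0, hq0⟩ : ∃ r : G'.Walk a b, r.IsPath := ⟨w0.toPath.1, w0.toPath.2⟩
  cases q0 with
  | nil => exact absurd hab (G.loopless.irrefl a)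
  | @cons _ c _ hac r =>
  set G'' := G'.deleteEdges {s(a,c)} with hG''def
  have hbridge : ¬ G''.Reachable a c := by
    have hB := (SimpleGraph.isAcyclic_iff_forall_adj_isBridge.mp hG'ac) hac
    exact SimpleGraph.isBridge_iff.mp hB
  set A : Set (Fin n) := {v | G''.Reachable v a} with hAdef
  set B : Set (Fin n) := {v | G''.Reachable v c} with hBdef
  have hq0' : a ∉ r.support := ((Walk.cons_isPath_iff hac r).mp hq0).2
  have haA : a ∈ A := Reachable.refl a
  have hcB : c ∈ B := Reachable.refl c
  have hdisjAB : ∀ v, v ∈ A → v ∈ B → False := fun v h1 h2 =>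
    hbridge ((h1 : G''.Reachable v a).symm.trans h2)
  have haB : a ∉ B := fun h => hdisjAB a haA h
  have hcA : c ∉ A := fun h => hdisjAB c h hcB
  have hbB : b ∈ B := by
    refine ⟨(r.toDeleteEdges {s(a,c)} ?_).reverse⟩
    intro e he hmem
    rw [Set.mem_singleton_iff] at hmem
    subst hmem
    exact hq0' (Walk.fst_mem_support_of_mem_edges r he)
  have hbA : b ∉ A := fun h => hdisjAB b h hbB
  have hcover : ∀ v, v ∈ A ∨ v ∈ B := by
    intro v
    obtain ⟨w1⟩ := hG'conn.preconnected v a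
    obtain ⟨q1, hq1⟩ : ∃ r : G'.Walk v a, r.IsPath := ⟨w1.toPath.1, w1.toPath.2⟩
    by_cases hf : s(a,c) ∈ q1.edges
    · right
      have hf' : s(a,c) ∈ q1.reverse.edges := by
        rw [Walk.edges_reverse, List.mem_reverse]
        exact hf
      obtain ⟨r1, hr1⟩ := exists_walk_avoid q1.reverse hq1.reverse hf'
      refine ⟨(r1.toDeleteEdges {s(a,c)} ?_).reverse⟩
      intro e he hmem
      rw [Set.mem_singleton_iff] at hmem
      subst hmem
      exact hr1 he
    · left
      refine ⟨q1.toDeleteEdges {s(a,c)} ?_⟩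
      intro e he hmem
      rw [Set.mem_singleton_iff] at hmem
      subst hmem
      exact hf he
  have hGadj'' : ∀ x y : Fin n, G''.Adj x y ↔
      (G.Adj x y ∧ s(x,y) ≠ s(a,b) ∧ s(x,y) ≠ s(a,c)) := by
    intro x y
    rw [hG''def, hG'def]
    simp only [SimpleGraph.deleteEdges_adj, Set.mem_singleton_iff]
    tauto
  have hG''le : G'' ≤ G' := SimpleGraph.deleteEdges_le _
  have hG''ac : G''.IsAcyclic := isAcyclic_mono hG''le hG'ac
  have hindA : G.induce A = G''.induce A := by
    ext ⟨x, hx⟩ ⟨y, hy⟩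
    simp only [SimpleGraph.comap_adj, Function.Embedding.coe_subtype]
    rw [hGadj'' x y]
    constructor
    · intro h
      refine ⟨h, ?_, ?_⟩
      · intro heq
        rw [Sym2.eq_iff] at heq
        rcases heq with ⟨rfl, rfl⟩ | ⟨rfl, rfl⟩
        · exact hbA hy
        · exact hbA hx
      · intro heq
        rw [Sym2.eq_iff] at heq
        rcases heq with ⟨rfl, rfl⟩ | ⟨rfl, rfl⟩
        · exact hcA hy
        · exact hcA hx
    · tauto
  have hindB : G.induce B = G''.induce B := by
    ext ⟨x, hx⟩ ⟨y, hy⟩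
    simp only [SimpleGraph.comap_adj, Function.Embedding.coe_subtype]
    rw [hGadj'' x y]
    constructor
    · intro h
      refine ⟨h, ?_, ?_⟩
      · intro heq
        rw [Sym2.eq_iff] at heq
        rcases heq with ⟨rfl, rfl⟩ | ⟨rfl, rfl⟩
        · exact haB hx
        · exact haB hy
      · intro heq
        rw [Sym2.eq_iff] at heq
        rcases heq with ⟨rfl, rfl⟩ | ⟨rfl, rfl⟩
        · exact haB hx
        · exact haB hy
    · tauto
  have treeA : (G.induce A).IsTree := by
    rw [hindA]
    exact ⟨induce_reachSet_connected a, isAcyclic_induce hG''ac A⟩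
  have treeB : (G.induce B).IsTree := by
    rw [hindB]
    exact ⟨induce_reachSet_connected c, isAcyclic_induce hG''ac B⟩
  have hANeB : A ≠ B := fun h => haB (h ▸ haA)
  have h2mem : 2 ∈ { k : ℕ | ∃ 𝒯 : Finset (Set (Fin n)), 𝒯.card = k ∧
      (∀ S ∈ 𝒯, (G.induce S).IsTree) ∧
      (𝒯 : Set (Set (Fin n))).PairwiseDisjoint id ∧
      (∀ v : Fin n, ∃ S ∈ 𝒯, v ∈ S) } := by
    refine ⟨{A, B}, Finset.card_pair hANeB, ?_, ?_, ?_⟩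
    · intro S hS
      rcases Finset.mem_insert.mp hS with rfl | hS
      · exact treeA
      · rw [Finset.mem_singleton.mp hS]
        exact treeB
    · intro x hx y hy hne
      simp only [Finset.coe_insert, Finset.coe_singleton, Set.mem_insert_iff,
        Set.mem_singleton_iff] at hx hy
      have hd : Disjoint A B := Set.disjoint_left.mpr fun v h1 h2 => hdisjAB v h1 h2
      rcases hx with rfl | rfl <;> rcases hy with rfl | rfl
      · exact absurd rfl hne
      · exact hd
      · exact hd.symm
      · exact absurd rfl hne
    · intro v
      rcases hcover v with h | h
      · exact ⟨A, by simp, h⟩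
      · exact ⟨B, by simp, h⟩
  have h2le : ∀ k ∈ { k : ℕ | ∃ 𝒯 : Finset (Set (Fin n)), 𝒯.card = k ∧
      (∀ S ∈ 𝒯, (G.induce S).IsTree) ∧
      (𝒯 : Set (Set (Fin n))).PairwiseDisjoint id ∧
      (∀ v : Fin n, ∃ S ∈ 𝒯, v ∈ S) }, 2 ≤ k := by
    rintro k ⟨𝒯, hcard, htree, -, hcov⟩
    by_contra hlt
    push_neg at hlt
    interval_cases k
    · obtain rfl := Finset.card_eq_zero.mp hcard
      obtain ⟨S, hS, -⟩ := hcov hnem.some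
      exact absurd hS (Finset.notMem_empty S)
    · obtain ⟨S, rfl⟩ := Finset.card_eq_one.mp hcard
      have hSuniv : S = Set.univ := by
        apply Set.eq_univ_of_forall
        intro v
        obtain ⟨T, hT, hv⟩ := hcov v
        rwa [Finset.mem_singleton.mp hT] at hv
      have ht := htree S (Finset.mem_singleton_self S)
      rw [hSuniv] at ht
      have hac : G.IsAcyclic := by
        intro v cw hcw
        exact ht.IsAcyclic
          (cw.map (SimpleGraph.induceUnivIso G).symm.toEmbedding.toHom)
          (hcw.map (SimpleGraph.induceUnivIso G).symm.toEmbedding.injective)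
      have ht' : G.IsTree := ⟨hconn, hac⟩
      have := ht'.card_edgeFinset
      rw [hE, Fintype.card_fin] at this
      omega
  rw [treeCoverNumber]
  exact le_antisymm (Nat.sInf_le h2mem) (le_csInf ⟨2, h2mem⟩ h2le)
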